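/- Let θ ∈ ℝ be irrational. Then for every ε > 0 there exists a positive integer n such that dist(nθ, ℤ) < ε and dist(n²θ, ℤ) < ε. -/

import Mathlib

open Filter Topology

/-- Dirichlet: for any real `ξ` and `δ > 0` there is `n > 0` with `nξ` within `δ` of an
integer. -/
lemma dir_aux (ξ : ℝ) {δ : ℝ} (hδ : 0 < δ) :
    ∃ n : ℕ, 0 < n ∧ ∃ p : ℤ, |(n : ℝ) * ξ - p| < δ := by
  obtain ⟨N, hN⟩ := exists_nat_gt (1 / δ)
  have h1δ : (0 : ℝ) < 1 / δ := by positivity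
  have hN0 : 0 < N := by exact_mod_cast h1δ.trans hN
  obtain ⟨j, k, hk0, hkN, h⟩ := Real.exists_int_int_abs_mul_sub_le ξ hN0
  refine ⟨k.toNat, by omega, j, ?_⟩
  have hcast : ((k.toNat : ℕ) : ℝ) = (k : ℝ) := by
    exact_mod_cast congrArg (Int.cast : ℤ → ℝ) (Int.toNat_of_nonneg hk0.le)
  rw [hcast]
  refine h.trans_lt ?_
  rw [div_lt_iff₀ (by positivity)]
  rw [div_lt_iff₀ hδ] at hN
  nlinarith [hN]

/-- `z` is achievable : there are arbitrarily good `n` with `nθ` near an integer and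
`n²θ` near `z` plus an integer. -/
def Achieves (θ z : ℝ) : Prop :=
  ∀ δ : ℝ, 0 < δ → ∃ n : ℕ, 0 < n ∧ (∃ p : ℤ, |(n : ℝ) * θ - p| < δ) ∧
    (∃ q : ℤ, |(n : ℝ) ^ 2 * θ - z - q| < δ)

lemma exists_achieves (θ : ℝ) : ∃ z : ℝ, Achieves θ z := by
  have H : ∀ k : ℕ, ∃ n : ℕ, 0 < n ∧ ∃ p : ℤ, |(n : ℝ) * θ - p| < 1 / (k + 1) :=
    fun k => dir_aux θ (by positivity)
  choose f hf p hp using H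
  set x : ℕ → ℝ := fun k => Int.fract ((f k : ℝ) ^ 2 * θ) with hx
  have hxmem : ∀ k, x k ∈ Set.Icc (0 : ℝ) 1 :=
    fun k => ⟨Int.fract_nonneg _, (Int.fract_lt_one _).le⟩
  obtain ⟨z, -, φ, hφ, hconv⟩ := isCompact_Icc.tendsto_subseq hxmem
  refine ⟨z, fun δ hδ => ?_⟩
  obtain ⟨K₂, hK₂⟩ := Metric.tendsto_atTop.mp hconv δ hδ
  obtain ⟨K, hK⟩ := exists_nat_gt (1 / δ)
  set k := max K K₂ with hk
  refine ⟨f (φ k), hf _, ⟨p (φ k), ?_⟩, ⟨⌊(f (φ k) : ℝ) ^ 2 * θ⌋, ?_⟩⟩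
  · refine (hp (φ k)).trans_le ?_
    have h1 : (K : ℝ) ≤ φ k := by
      have : K ≤ φ k := le_trans (le_max_left _ _) (hφ.le_apply)
      exact_mod_cast this
    have h2 : 1 / δ < (φ k : ℝ) + 1 := by linarith
    rw [div_le_iff₀ (by positivity)]
    rw [div_lt_iff₀ hδ] at h2
    nlinarith
  · have hd := hK₂ k (le_max_right _ _)
    rw [Real.dist_eq] at hd
    have heq : (f (φ k) : ℝ) ^ 2 * θ - z - ⌊(f (φ k) : ℝ) ^ 2 * θ⌋ = x (φ k) - z := by
      simp only [hx, Int.fract]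
      ring
    rw [heq]
    exact hd

lemma achieves_add {θ z w : ℝ} (hz : Achieves θ z) (hw : Achieves θ w) :
    Achieves θ (z + w) := by
  intro δ hδ
  obtain ⟨n, hn, ⟨p, hp⟩, ⟨q, hq⟩⟩ := hz (δ / 4) (by positivity)
  obtain ⟨m, hm, ⟨p', hp'⟩, ⟨q', hq'⟩⟩ := hw (δ / (4 * (2 * n + 1))) (by positivity)
  refine ⟨n + m, by omega, ⟨p + p', ?_⟩, ⟨q + q' + 2 * (n : ℤ) * p', ?_⟩⟩
  · have key : ((n + m : ℕ) : ℝ) * θ - ((p + p' : ℤ) : ℝ) =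
        ((n : ℝ) * θ - p) + ((m : ℝ) * θ - p') := by push_cast; ring
    rw [key]
    have h1 : δ / (4 * (2 * (n : ℝ) + 1)) ≤ δ / 4 := by
      apply div_le_div_of_nonneg_left hδ.le (by norm_num) ?_
      have : (0 : ℝ) ≤ (n : ℝ) := Nat.cast_nonneg n
      linarith
    calc |((n : ℝ) * θ - p) + ((m : ℝ) * θ - p')| ≤ _ := abs_add_le _ _
      _ < δ / 4 + δ / (4 * (2 * n + 1)) := by push_cast; exact add_lt_add hp hp'
      _ ≤ δ / 4 + δ / 4 := by push_cast at h1 ⊢; linarith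
      _ < δ := by linarith
  · have key : ((n + m : ℕ) : ℝ) ^ 2 * θ - (z + w) - ((q + q' + 2 * (n : ℤ) * p' : ℤ) : ℝ) =
        ((n : ℝ) ^ 2 * θ - z - q) + ((m : ℝ) ^ 2 * θ - w - q') +
          2 * (n : ℝ) * ((m : ℝ) * θ - p') := by push_cast; ring
    rw [key]
    have hnn : (0 : ℝ) ≤ 2 * (n : ℝ) := by positivity
    have h2 : |2 * (n : ℝ) * ((m : ℝ) * θ - p')| = 2 * (n : ℝ) * |(m : ℝ) * θ - p'| := by
      rw [abs_mul, abs_of_nonneg hnn]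
    calc |((n : ℝ) ^ 2 * θ - z - q) + ((m : ℝ) ^ 2 * θ - w - q') +
          2 * (n : ℝ) * ((m : ℝ) * θ - p')|
        ≤ |((n : ℝ) ^ 2 * θ - z - q) + ((m : ℝ) ^ 2 * θ - w - q')| +
          |2 * (n : ℝ) * ((m : ℝ) * θ - p')| := abs_add_le _ _
      _ ≤ |(n : ℝ) ^ 2 * θ - z - q| + |(m : ℝ) ^ 2 * θ - w - q'| +
          |2 * (n : ℝ) * ((m : ℝ) * θ - p')| := by linarith [abs_add_le ((n : ℝ) ^ 2 * θ - z - q) ((m : ℝ) ^ 2 * θ - w - q')]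
      _ < δ / 4 + δ / (4 * (2 * n + 1)) + 2 * (n : ℝ) * (δ / (4 * (2 * n + 1))) := by
          rw [h2]
          have h3 : 2 * (n : ℝ) * |(m : ℝ) * θ - p'| ≤
              2 * (n : ℝ) * (δ / (4 * (2 * n + 1))) :=
            mul_le_mul_of_nonneg_left hp'.le hnn
          exact add_lt_add_of_lt_of_le (add_lt_add hq hq') h3
      _ = δ / 4 + (2 * (n : ℝ) + 1) * (δ / (4 * (2 * n + 1))) := by ring
      _ = δ / 4 + δ / 4 := by
          rw [mul_div_assoc']
          congr 1
          have hpos : (0 : ℝ) < 2 * (n : ℝ) + 1 := by positivity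
          field_simp
      _ < δ := by linarith

lemma achieves_nsmul {θ z : ℝ} (hz : Achieves θ z) : ∀ k : ℕ, Achieves θ ((k + 1) * z) := by
  intro k
  induction k with
  | zero => simpa using hz
  | succ k ih =>
      have := achieves_add ih hz
      have heq : ((k : ℝ) + 1) * z + z = ((k + 1 : ℕ) + 1) * z := by push_cast; ring
      rwa [heq] at this

theorem stmt_3 (θ : ℝ) (hθ : Irrational θ) :
    ∀ ε : ℝ, 0 < ε → ∃ n : ℕ, 0 < n ∧
      (∃ m : ℤ, |(n : ℝ) * θ - m| < ε) ∧ (∃ m : ℤ, |(n : ℝ) ^ 2 * θ - m| < ε) := by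
  intro ε hε
  obtain ⟨z, hz⟩ := exists_achieves θ
  obtain ⟨k, hk, r, hr⟩ := dir_aux z (show (0:ℝ) < ε / 2 by positivity)
  have hkz : Achieves θ ((k : ℝ) * z) := by
    have := achieves_nsmul hz (k - 1)
    have heq : ((k - 1 : ℕ) : ℝ) + 1 = (k : ℝ) := by
      have : (k - 1 : ℕ) + 1 = k := by omega
      exact_mod_cast congrArg (Nat.cast : ℕ → ℝ) this
    rwa [heq] at this
  obtain ⟨n, hn, ⟨p, hp⟩, ⟨q, hq⟩⟩ := hkz (ε / 2) (by positivity)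
  refine ⟨n, hn, ⟨p, hp.trans (by linarith)⟩, ⟨q + r, ?_⟩⟩
  have key : (n : ℝ) ^ 2 * θ - ((q + r : ℤ) : ℝ) =
      ((n : ℝ) ^ 2 * θ - (k : ℝ) * z - q) + ((k : ℝ) * z - r) := by push_cast; ring
  rw [key]
  calc |((n : ℝ) ^ 2 * θ - (k : ℝ) * z - q) + ((k : ℝ) * z - r)|
      ≤ |(n : ℝ) ^ 2 * θ - (k : ℝ) * z - q| + |(k : ℝ) * z - r| := abs_add_le _ _
    _ < ε / 2 + ε / 2 := add_lt_add hq hr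
    _ = ε := by ring
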